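/- Every convex polyhedron P ⊂ ℝⁿ all of whose dihedral angles are at most π/2 is extremal: any combinatorially equivalent convex polyhedron P' with ∠_{ij}(P') ≤ ∠_{ij}(P) for all adjacent face pairs (i,j) must satisfy ∠_{ij}(P') = ∠_{ij}(P) for all (i,j). -/

import Mathlib

open scoped RealInnerProductSpace
open Finset

section ConeAux

variable {E : Type*} [NormedAddCommGroup E] [InnerProductSpace ℝ E] [FiniteDimensional ℝ E]
variable {κ : Type*} [Fintype κ]

/-- membership in the finitely generated cone spanned by the family `v`. -/
def InCone (v : κ → E) (x : E) : Prop :=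
  ∃ t : κ → ℝ, (∀ k, 0 ≤ t k) ∧ ∑ k, t k • v k = x

lemma inCone_carath {v : κ → E} {x : E} (h : InCone v x) :
    ∃ t : κ → ℝ, (∀ k, 0 ≤ t k) ∧ ∑ k, t k • v k = x ∧
      LinearIndependent ℝ (fun k : {k // t k ≠ 0} => v k) := by
  classical
  obtain ⟨t, ht0, htx⟩ := h
  suffices H : ∀ (N : ℕ) (t : κ → ℝ), (univ.filter fun k => t k ≠ 0).card ≤ N →
      (∀ k, 0 ≤ t k) → ∑ k, t k • v k = x →
      ∃ t' : κ → ℝ, (∀ k, 0 ≤ t' k) ∧ ∑ k, t' k • v k = x ∧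
        LinearIndependent ℝ (fun k : {k // t' k ≠ 0} => v k) by
    exact H _ t le_rfl ht0 htx
  intro N
  induction N with
  | zero =>
    intro t hcard ht0 htx
    refine ⟨t, ht0, htx, ?_⟩
    have hz : ∀ k, t k = 0 := by
      intro k; by_contra hk
      have hmem : k ∈ univ.filter fun k => t k ≠ 0 := by simp [hk]
      have := Finset.card_pos.mpr ⟨k, hmem⟩
      omega
    have : IsEmpty {k // t k ≠ 0} := ⟨fun ⟨k, hk⟩ => hk (hz k)⟩
    exact linearIndependent_empty_type
  | succ N IH =>
    intro t hcard ht0 htx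
    by_cases hli : LinearIndependent ℝ (fun k : {k // t k ≠ 0} => v k)
    · exact ⟨t, ht0, htx, hli⟩
    · obtain ⟨g, hg0, i₀, hi₀⟩ := Fintype.not_linearIndependent_iff.mp hli
      -- extend g by zero
      set gg : κ → ℝ := fun k => if h : t k ≠ 0 then g ⟨k, h⟩ else 0 with hgg
      have hggsum : ∑ k, gg k • v k = 0 := by
        have h1 : ∑ k ∈ univ.filter (fun k => t k ≠ 0), gg k • v k = ∑ k, gg k • v k := by
          refine Finset.sum_subset (Finset.subset_univ _) ?_
          intro k _ hk
          simp only [mem_filter, mem_univ, true_and] at hk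
          push_neg at hk
          simp [hgg, hk]
        have h2 : ∑ k ∈ univ.filter (fun k => t k ≠ 0), gg k • v k
            = ∑ k : {k // t k ≠ 0}, gg (k : κ) • v (k : κ) :=
          Finset.sum_subtype _ (fun k => by simp) (fun k => gg k • v k)
        have h3 : ∑ k : {k // t k ≠ 0}, gg (k : κ) • v (k : κ)
            = ∑ k : {k // t k ≠ 0}, g k • v (k : κ) := by
          refine Finset.sum_congr rfl fun k _ => ?_
          simp only [hgg]
          rw [dif_pos k.2]
        rw [← h1, h2, h3, hg0]
      have hggsupp : ∀ k, gg k ≠ 0 → t k ≠ 0 := by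
        intro k hk
        by_contra h0
        simp [hgg, h0] at hk
      have hggne : gg i₀ ≠ 0 := by simp [hgg, i₀.2]; exact hi₀
      -- get w with a positive entry
      obtain ⟨w, hwsum, hwsupp, k₁, hk₁⟩ :
          ∃ w : κ → ℝ, ∑ k, w k • v k = 0 ∧ (∀ k, w k ≠ 0 → t k ≠ 0) ∧ ∃ k, 0 < w k := by
        rcases hggne.lt_or_gt with h | h
        · refine ⟨fun k => -gg k, ?_, fun k hk => hggsupp k (by simpa using hk), i₀, neg_pos.mpr h⟩
          simp only [neg_smul, Finset.sum_neg_distrib, hggsum, neg_zero]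
        · exact ⟨gg, hggsum, hggsupp, i₀, h⟩
      set T := univ.filter fun k => 0 < w k with hT
      have hTne : T.Nonempty := ⟨k₁, by simp [hT, hk₁]⟩
      set r := T.inf' hTne fun k => t k / w k with hr
      have hrle : ∀ k ∈ T, r ≤ t k / w k := fun k hk => Finset.inf'_le _ hk
      have hr0 : 0 ≤ r := by
        rw [hr, Finset.le_inf'_iff]
        intro k hk
        simp only [hT, mem_filter, mem_univ, true_and] at hk
        exact div_nonneg (ht0 k) hk.le
      obtain ⟨k₀, hk₀T, hk₀⟩ := T.exists_mem_eq_inf' hTne fun k => t k / w k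
      set t' : κ → ℝ := fun k => t k - r * w k with ht'
      have ht'0 : ∀ k, 0 ≤ t' k := by
        intro k
        by_cases hk : 0 < w k
        · have h1 := hrle k (by simp [hT, hk])
          rw [le_div_iff₀ hk] at h1
          simp only [ht']; linarith
        · push_neg at hk
          have : 0 ≤ -(r * w k) := by nlinarith
          simp only [ht']; linarith [ht0 k]
      have hsum' : ∑ k, t' k • v k = x := by
        simp only [ht', sub_smul]
        rw [Finset.sum_sub_distrib, htx]
        have : ∑ k, (r * w k) • v k = r • ∑ k, w k • v k := by
          rw [Finset.smul_sum]
          exact Finset.sum_congr rfl fun k _ => by rw [smul_smul]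
        rw [this, hwsum, smul_zero, sub_zero]
      have hwk₀ : 0 < w k₀ := by simpa [hT] using hk₀T
      have htk₀ : t k₀ ≠ 0 := hwsupp k₀ (ne_of_gt hwk₀)
      have ht'k₀ : t' k₀ = 0 := by
        have he : t' k₀ = t k₀ - r * w k₀ := rfl
        rw [he, hr, hk₀]
        field_simp
        ring
      have hsub : (univ.filter fun k => t' k ≠ 0) ⊂ (univ.filter fun k => t k ≠ 0) := by
        refine Finset.ssubset_iff_of_subset ?_ |>.mpr ⟨k₀, by simp [htk₀], by simp [ht'k₀]⟩
        intro k hk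
        simp only [mem_filter, mem_univ, true_and] at hk ⊢
        intro h0
        have hw0 : w k = 0 := by
          by_contra hw
          exact hwsupp k hw h0
        apply hk
        simp [ht', h0, hw0]
      have hcard' : (univ.filter fun k => t' k ≠ 0).card ≤ N := by
        have := Finset.card_lt_card hsub
        omega
      exact IH t' hcard' ht'0 hsum'


lemma isClosed_inCone (v : κ → E) : IsClosed {x | InCone v x} := by
  classical
  have main : {x | InCone v x} =
      ⋃ (s : Finset κ), ⋃ (_ : LinearIndependent ℝ fun k : ↥s => v (k : κ)),
        (fun t : ↥s → ℝ => ∑ k, t k • v (k : κ)) '' {t | ∀ k, 0 ≤ t k} := by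
    ext x
    constructor
    · intro hx
      obtain ⟨t, ht0, htx, hli⟩ := inCone_carath hx
      set s : Finset κ := univ.filter fun k => t k ≠ 0 with hs
      set e : (↥s) ≃ {k // t k ≠ 0} := Equiv.subtypeEquivRight (by intro k; simp [hs]) with he
      have hli' : LinearIndependent ℝ fun k : ↥s => v (k : κ) := by
        have h := hli.comp e e.injective
        have heq : ((fun k : {k // t k ≠ 0} => v (k : κ)) ∘ e) = fun k : ↥s => v (k : κ) := by
          funext k
          simp [he, Equiv.subtypeEquivRight_apply]
        rwa [heq] at h
      refine Set.mem_iUnion.2 ⟨s, Set.mem_iUnion.2 ⟨hli', ?_⟩⟩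
      refine ⟨fun k => t (k : κ), fun k => ht0 _, ?_⟩
      have h1 : ∑ k : ↥s, t (k : κ) • v (k : κ) = ∑ k ∈ s, t k • v k :=
        Finset.sum_coe_sort s (fun k => t k • v k)
      have h2 : ∑ k ∈ s, t k • v k = ∑ k, t k • v k := by
        refine Finset.sum_subset (Finset.subset_univ _) ?_
        intro k _ hk
        simp only [hs, mem_filter, mem_univ, true_and] at hk
        push_neg at hk
        simp [hk]
      show ∑ k : ↥s, t (k : κ) • v (k : κ) = x
      rw [h1, h2, htx]
    · intro hx
      obtain ⟨s, hs⟩ := Set.mem_iUnion.1 hx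
      obtain ⟨hli, hxs⟩ := Set.mem_iUnion.1 hs
      obtain ⟨t, ht0, htx⟩ := hxs
      refine ⟨fun k => if h : k ∈ s then t ⟨k, h⟩ else 0, fun k => ?_, ?_⟩
      · by_cases h : k ∈ s <;> simp [h, ht0 _]
      · have h2 : ∑ k ∈ s, (if h : k ∈ s then t ⟨k, h⟩ else 0) • v k
            = ∑ k : κ, (if h : k ∈ s then t ⟨k, h⟩ else 0) • v k := by
          refine Finset.sum_subset (Finset.subset_univ _) ?_
          intro k _ hk
          simp [hk]
        have h1 : ∑ k : ↥s, t k • v (k : κ)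
            = ∑ k ∈ s, (if h : k ∈ s then t ⟨k, h⟩ else 0) • v k := by
          rw [← Finset.sum_coe_sort s (fun k => (if h : k ∈ s then t ⟨k, h⟩ else 0) • v k)]
          refine Finset.sum_congr rfl fun k _ => ?_
          rw [dif_pos k.2]
        rw [← h2, ← h1]
        exact htx
  rw [main]
  refine isClosed_iUnion_of_finite fun s => isClosed_iUnion_of_finite fun hli => ?_
  -- the linear map
  set L : (↥s → ℝ) →ₗ[ℝ] E :=
    { toFun := fun t => ∑ k, t k • v (k : κ)
      map_add' := by
        intro a b
        simp [add_smul, Finset.sum_add_distrib]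
      map_smul' := by
        intro m a
        simp [smul_smul, Finset.smul_sum] } with hL
  have hinj : Function.Injective L := by
    rw [← LinearMap.ker_eq_bot, LinearMap.ker_eq_bot']
    intro m hm
    have := Fintype.linearIndependent_iff.mp hli m hm
    funext k
    exact this k
  have hemb := LinearMap.isClosedEmbedding_of_injective (f := L)
      (by rwa [LinearMap.ker_eq_bot])
  have hcl : IsClosed {t : ↥s → ℝ | ∀ k, 0 ≤ t k} := by
    have : {t : ↥s → ℝ | ∀ k, 0 ≤ t k} = ⋂ k, {t | 0 ≤ t k} := by
      ext; simp [Set.mem_iInter]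
    rw [this]
    exact isClosed_iInter fun k => isClosed_le continuous_const (continuous_apply k)
  exact hemb.isClosedMap _ hcl

lemma convex_inCone (v : κ → E) : Convex ℝ {x | InCone v x} := by
  intro x hx y hy a b ha hb _
  obtain ⟨s, hs0, hsx⟩ := hx
  obtain ⟨t, ht0, hty⟩ := hy
  refine ⟨fun k => a * s k + b * t k, fun k => by have h1 := hs0 k; have h2 := ht0 k; dsimp only; nlinarith, ?_⟩
  have : ∀ k, (a * s k + b * t k) • v k = a • (s k • v k) + b • (t k • v k) := by
    intro k
    rw [add_smul, smul_smul, smul_smul]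
  simp_rw [this]
  rw [Finset.sum_add_distrib, ← Finset.smul_sum, ← Finset.smul_sum, hsx, hty]

lemma exists_sep {v : κ → E} {x : E} (hx : ¬ InCone v x) :
    ∃ d : E, (∀ k, ⟪d, v k⟫ ≤ 0) ∧ 0 < ⟪d, x⟫ := by
  classical
  obtain ⟨f, z, hfz, hzx⟩ :=
    geometric_hahn_banach_closed_point (convex_inCone v) (isClosed_inCone v) hx
  have h0 : (0 : E) ∈ {x | InCone v x} := ⟨fun _ => 0, fun _ => le_rfl, by simp⟩
  have hz0 : 0 < z := by
    have := hfz 0 h0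
    simpa using this
  have hgen : ∀ k, f (v k) ≤ 0 := by
    intro k
    by_contra hpos
    push_neg at hpos
    have hmem : ∀ cc : ℝ, 0 ≤ cc → cc • v k ∈ {x | InCone v x} := by
      intro cc hcc
      refine ⟨fun l => if l = k then cc else 0, fun l => by by_cases h : l = k <;> simp [h, hcc], ?_⟩
      simp [ite_smul]
    have hc := hfz _ (hmem ((z + 1) / f (v k)) (div_pos (by linarith) hpos).le)
    rw [map_smul] at hc
    simp only [smul_eq_mul] at hc
    rw [div_mul_cancel₀] at hc
    · linarith
    · exact ne_of_gt hpos
  refine ⟨(InnerProductSpace.toDual ℝ E).symm f, fun k => ?_, ?_⟩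
  · rw [InnerProductSpace.toDual_symm_apply]
    exact hgen k
  · rw [InnerProductSpace.toDual_symm_apply]
    linarith

lemma exists_pos_comb {ι : Type*} [Fintype ι] (u : ι → E) (c : ι → ℝ)
    (hcpt : IsCompact {x : E | ∀ i, ⟪u i, x⟫ ≤ c i})
    (hne : {x : E | ∀ i, ⟪u i, x⟫ ≤ c i}.Nonempty) :
    ∃ l : ι → ℝ, (∀ i, 0 < l i) ∧ ∑ i, l i • u i = 0 := by
  classical
  by_cases h : InCone u (-(∑ i, u i))
  · obtain ⟨t, ht0, hts⟩ := h
    refine ⟨fun i => t i + 1, fun i => by have h := ht0 i; dsimp only; linarith, ?_⟩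
    have : ∀ i, (t i + 1) • u i = t i • u i + u i := by
      intro i; rw [add_smul, one_smul]
    simp_rw [this]
    rw [Finset.sum_add_distrib, hts]
    simp
  · exfalso
    obtain ⟨d, hd1, hd2⟩ := exists_sep h
    obtain ⟨x₀, hx₀⟩ := hne
    have hray : ∀ t : ℝ, 0 ≤ t → (x₀ + t • d) ∈ {x : E | ∀ i, ⟪u i, x⟫ ≤ c i} := by
      intro t ht i
      have heq : ⟪u i, x₀ + t • d⟫ = ⟪u i, x₀⟫ + t * ⟪u i, d⟫ := by
        rw [inner_add_right, real_inner_smul_right]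
      have h1 : ⟪u i, d⟫ ≤ 0 := by rw [real_inner_comm]; exact hd1 i
      have h2 := hx₀ i
      rw [heq]
      nlinarith
    have hd0 : d ≠ 0 := by
      intro h0
      rw [h0] at hd2
      simp at hd2
    have hdpos : 0 < ‖d‖ := norm_pos_iff.mpr hd0
    obtain ⟨R, hR⟩ := hcpt.isBounded.exists_norm_le
    set t := (R + ‖x₀‖ + 1) / ‖d‖ with hts
    have hR0 : 0 ≤ R := le_trans (norm_nonneg x₀) (hR x₀ hx₀)
    have ht0 : 0 ≤ t := by
      rw [hts]
      exact div_nonneg (by linarith [norm_nonneg x₀]) (norm_nonneg d)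
    have hmem := hR _ (hray t ht0)
    have htd : ‖t • d‖ = t * ‖d‖ := by
      rw [norm_smul, Real.norm_of_nonneg ht0]
    have htri : ‖t • d‖ ≤ ‖x₀ + t • d‖ + ‖x₀‖ := by
      have := norm_sub_le (x₀ + t • d) x₀
      simpa using this
    have : t * ‖d‖ = R + ‖x₀‖ + 1 := by
      rw [hts]; field_simp
    linarith [htri, hmem, htd.symm.trans_le (le_refl _)]


lemma decomp {ι : Type*} [Fintype ι] {u : ι → E} {c : ι → ℝ}
    (hcpt : IsCompact {x : E | ∀ l, ⟪u l, x⟫ ≤ c l})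
    (hfacet : ∀ l, ∃ x, (∀ m, ⟪u m, x⟫ ≤ c m) ∧ ⟪u l, x⟫ = c l)
    {i j : ι} (hij : i ≠ j)
    (hnadj : ¬ ∃ x, (∀ l, ⟪u l, x⟫ ≤ c l) ∧ ⟪u i, x⟫ = c i ∧ ⟪u j, x⟫ = c j) :
    ∃ (S : Finset ι) (α : ℝ) (β : ι → ℝ),
      i ∉ S ∧ j ∉ S ∧ (∀ k ∈ S, 0 ≤ β k) ∧
      (∀ k ∈ S, ∃ x, (∀ l, ⟪u l, x⟫ ≤ c l) ∧ ⟪u i, x⟫ = c i ∧ ⟪u k, x⟫ = c k) ∧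
      α < 0 ∧ u j = α • u i + ∑ k ∈ S, β k • u k := by
  classical
  obtain ⟨xi, hxiP, hxi⟩ := hfacet i
  set P : Set E := {x | ∀ l, ⟪u l, x⟫ ≤ c l} with hP
  set Q : Set E := P ∩ {x | ⟪u i, x⟫ = c i} with hQ
  have hQc : IsCompact Q := hcpt.inter_right
    (isClosed_eq (Continuous.inner continuous_const continuous_id) continuous_const)
  have hQne : Q.Nonempty := ⟨xi, hxiP, hxi⟩
  obtain ⟨p, hpQ, hpmax⟩ := hQc.exists_isMaxOn hQne
    ((Continuous.inner continuous_const continuous_id).continuousOn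
      (s := Q) (f := fun x => ⟪u j, x⟫))
  obtain ⟨hpP, hpi⟩ := hpQ
  have hpi' : ⟪u i, p⟫ = c i := hpi
  set S : Finset ι := univ.filter fun k => k ≠ i ∧ k ≠ j ∧ ⟪u k, p⟫ = c k with hS
  have hiS : i ∉ S := by simp [hS]
  have hjS : j ∉ S := by simp [hS]
  have hSact : ∀ k ∈ S, ⟪u k, p⟫ = c k := by
    intro k hk
    simp only [hS, mem_filter, mem_univ, true_and] at hk
    exact hk.2.2
  have hadjS : ∀ k ∈ S, ∃ x, (∀ l, ⟪u l, x⟫ ≤ c l) ∧ ⟪u i, x⟫ = c i ∧ ⟪u k, x⟫ = c k :=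
    fun k hk => ⟨p, hpP, hpi, hSact k hk⟩
  have hslack : ∀ k, k ≠ i → k ∉ S → ⟪u k, p⟫ < c k := by
    intro k hki hkS
    rcases eq_or_ne k j with rfl | hkj
    · rcases (hpP k).lt_or_eq with h | h
      · exact h
      · exact absurd ⟨p, hpP, hpi, h⟩ hnadj
    · rcases (hpP k).lt_or_eq with h | h
      · exact h
      · exact absurd (by simp [hS, hki, hkj, h]) hkS
  set w : ι ⊕ Bool → E := Sum.elim (fun k => if k ∈ S then u k else 0)
      (fun b => if b then u i else -u i) with hw
  have hmem : InCone w (u j) := by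
    by_contra hn
    obtain ⟨d, hd1, hd2⟩ := exists_sep hn
    have hdi : ⟪d, u i⟫ = 0 := by
      have h1 := hd1 (Sum.inr true)
      have h2 := hd1 (Sum.inr false)
      simp only [hw, Sum.elim_inr, if_true, if_false, Bool.false_eq_true, inner_neg_right] at h1 h2
      linarith
    have hdS : ∀ k ∈ S, ⟪d, u k⟫ ≤ 0 := by
      intro k hk
      have := hd1 (Sum.inl k)
      simpa [hw, hk] using this
    have hdj : 0 < ⟪u j, d⟫ := by rw [real_inner_comm]; exact hd2
    have hev : ∀ᶠ tt : ℝ in nhds 0, ∀ k ∈ univ.filter (fun k => k ≠ i ∧ k ∉ S),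
        ⟪u k, p + tt • d⟫ < c k := by
      rw [Filter.eventually_all_finset]
      intro k hk
      simp only [mem_filter, mem_univ, true_and] at hk
      have hcont : Continuous fun tt : ℝ => ⟪u k, p + tt • d⟫ :=
        Continuous.inner continuous_const
          (continuous_const.add (continuous_id.smul continuous_const))
      have h0 : ⟪u k, p + (0:ℝ) • d⟫ < c k := by
        simpa using hslack k hk.1 hk.2
      exact hcont.continuousAt.eventually_lt continuousAt_const h0
    obtain ⟨tt, htev, htpos⟩ := ((hev.filter_mono nhdsWithin_le_nhds).and
      (self_mem_nhdsWithin : Set.Ioi (0:ℝ) ∈ nhdsWithin 0 (Set.Ioi 0))).exists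
    have httpos : (0:ℝ) < tt := htpos
    have hui_d : ⟪u i, d⟫ = 0 := by rw [real_inner_comm]; exact hdi
    have hpmem : (p + tt • d) ∈ Q := by
      constructor
      · intro l
        rcases eq_or_ne l i with rfl | hli2
        · rw [inner_add_right, real_inner_smul_right, hui_d]
          simp [hpi']
        · by_cases hlS : l ∈ S
          · have h1 : ⟪u l, d⟫ ≤ 0 := by rw [real_inner_comm]; exact hdS l hlS
            rw [inner_add_right, real_inner_smul_right]
            nlinarith [hSact l hlS]
          · exact (htev l (by simp [hli2, hlS])).le
      · show ⟪u i, p + tt • d⟫ = c i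
        rw [inner_add_right, real_inner_smul_right, hui_d, hpi']
        ring
    have hlt : ⟪u j, p⟫ < ⟪u j, p + tt • d⟫ := by
      rw [inner_add_right, real_inner_smul_right]
      nlinarith
    exact absurd (hpmax hpmem) (not_le.mpr hlt)
  obtain ⟨tc, htc0, htcs⟩ := hmem
  set α : ℝ := tc (Sum.inr true) - tc (Sum.inr false) with hα_def
  have hid : u j = α • u i + ∑ k ∈ S, tc (Sum.inl k) • u k := by
    rw [← htcs, Fintype.sum_sum_type]
    have hbool : ∑ b : Bool, tc (Sum.inr b) • w (Sum.inr b) = α • u i := by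
      rw [Fintype.sum_bool]
      simp only [hw, Sum.elim_inr, if_true, Bool.false_eq_true, if_false]
      rw [hα_def, sub_smul, smul_neg]
      abel
    have hil : ∑ k : ι, tc (Sum.inl k) • w (Sum.inl k) = ∑ k ∈ S, tc (Sum.inl k) • u k := by
      have he : ∀ k : ι, tc (Sum.inl k) • w (Sum.inl k)
          = if k ∈ S then tc (Sum.inl k) • u k else 0 := by
        intro k
        by_cases hk : k ∈ S <;> simp [hw, hk]
      simp_rw [he]
      rw [Finset.sum_ite_mem, Finset.univ_inter]
    rw [hbool, hil, add_comm]
  obtain ⟨q, hqP, hqj⟩ := hfacet j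
  have hpj : ⟪u j, p⟫ < c j := hslack j (Ne.symm hij) hjS
  have hδ : 0 < ⟪u j, q - p⟫ := by rw [inner_sub_right]; linarith [hqj]
  have hi' : ⟪u i, q - p⟫ ≤ 0 := by rw [inner_sub_right]; linarith [hqP i, hpi'.ge]
  have hk' : ∀ k ∈ S, ⟪u k, q - p⟫ ≤ 0 := by
    intro k hk
    rw [inner_sub_right]
    linarith [hqP k, (hSact k hk).ge]
  have hexp : ⟪u j, q - p⟫ = α * ⟪u i, q - p⟫
      + ∑ k ∈ S, tc (Sum.inl k) * ⟪u k, q - p⟫ := by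
    conv_lhs => rw [hid]
    rw [inner_add_left, real_inner_smul_left, sum_inner]
    congr 1
    exact Finset.sum_congr rfl fun k _ => real_inner_smul_left _ _ _
  have hsumle : ∑ k ∈ S, tc (Sum.inl k) * ⟪u k, q - p⟫ ≤ 0 :=
    Finset.sum_nonpos fun k hk => mul_nonpos_iff.2 (Or.inl ⟨htc0 _, hk' k hk⟩)
  have hαneg : α < 0 := by nlinarith
  exact ⟨S, α, fun k => tc (Sum.inl k), hiS, hjS, fun k _ => htc0 _, hadjS, hαneg, hid⟩


lemma nonadj_inner_lt_zero {ι : Type*} [Fintype ι] {u : ι → E} {c : ι → ℝ}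
    (hu : ∀ l, ‖u l‖ = 1)
    (hcpt : IsCompact {x : E | ∀ l, ⟪u l, x⟫ ≤ c l})
    (hfacet : ∀ l, ∃ x, (∀ m, ⟪u m, x⟫ ≤ c m) ∧ ⟪u l, x⟫ = c l)
    (hAdj : ∀ k l, k ≠ l →
      (∃ x, (∀ m, ⟪u m, x⟫ ≤ c m) ∧ ⟪u k, x⟫ = c k ∧ ⟪u l, x⟫ = c l) → ⟪u k, u l⟫ ≤ 0)
    {i j : ι} (hij : i ≠ j)
    (hnadj : ¬ ∃ x, (∀ l, ⟪u l, x⟫ ≤ c l) ∧ ⟪u i, x⟫ = c i ∧ ⟪u j, x⟫ = c j) :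
    ⟪u i, u j⟫ < 0 := by
  obtain ⟨S, α, β, hiS, hjS, hβ, hadjS, hα, hid⟩ := decomp hcpt hfacet hij hnadj
  have huii : ⟪u i, u i⟫ = 1 := by
    rw [real_inner_self_eq_norm_sq, hu i]; norm_num
  have h1 : ⟪u i, u j⟫ = α + ∑ k ∈ S, β k * ⟪u i, u k⟫ := by
    conv_lhs => rw [hid]
    rw [inner_add_right, real_inner_smul_right, inner_sum, huii, mul_one]
    congr 1
    exact Finset.sum_congr rfl fun k _ => real_inner_smul_right _ _ _
  have h2 : ∑ k ∈ S, β k * ⟪u i, u k⟫ ≤ 0 :=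
    Finset.sum_nonpos fun k hk => mul_nonpos_iff.2 (Or.inl ⟨hβ k hk,
      hAdj i k (fun he => hiS (he ▸ hk)) (hadjS k hk)⟩)
  rw [h1]
  linarith

lemma nonadj_inner_eq_neg_one {ι : Type*} [Fintype ι] {u : ι → E} {c : ι → ℝ}
    (hu : ∀ l, ‖u l‖ = 1)
    (hcpt : IsCompact {x : E | ∀ l, ⟪u l, x⟫ ≤ c l})
    (hfacet : ∀ l, ∃ x, (∀ m, ⟪u m, x⟫ ≤ c m) ∧ ⟪u l, x⟫ = c l)
    (hAll : ∀ k l, k ≠ l → ⟪u k, u l⟫ ≤ 0)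
    {i j : ι} (hij : i ≠ j)
    (hnadj : ¬ ∃ x, (∀ l, ⟪u l, x⟫ ≤ c l) ∧ ⟪u i, x⟫ = c i ∧ ⟪u j, x⟫ = c j) :
    ⟪u i, u j⟫ = -1 := by
  obtain ⟨S, α, β, hiS, hjS, hβ, hadjS, hα, hid⟩ := decomp hcpt hfacet hij hnadj
  have huii : ⟪u i, u i⟫ = 1 := by
    rw [real_inner_self_eq_norm_sq, hu i]; norm_num
  have hujj : ⟪u j, u j⟫ = 1 := by
    rw [real_inner_self_eq_norm_sq, hu j]; norm_num
  -- g ≤ α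
  have h1 : ⟪u i, u j⟫ = α + ∑ k ∈ S, β k * ⟪u i, u k⟫ := by
    conv_lhs => rw [hid]
    rw [inner_add_right, real_inner_smul_right, inner_sum, huii, mul_one]
    congr 1
    exact Finset.sum_congr rfl fun k _ => real_inner_smul_right _ _ _
  have h2 : ∑ k ∈ S, β k * ⟪u i, u k⟫ ≤ 0 :=
    Finset.sum_nonpos fun k hk => mul_nonpos_iff.2 (Or.inl ⟨hβ k hk,
      hAll i k (fun he => hiS (he ▸ hk))⟩)
  have hgα : ⟪u i, u j⟫ ≤ α := by rw [h1]; linarith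
  -- 1 ≤ α * g
  have h3 : (1:ℝ) = α * ⟪u i, u j⟫ + ∑ k ∈ S, β k * ⟪u k, u j⟫ := by
    have h4 : (⟪α • u i + ∑ k ∈ S, β k • u k, u j⟫ : ℝ) = 1 := by
      rw [← hid, hujj]
    rw [← h4, inner_add_left, real_inner_smul_left, sum_inner]
    congr 1
    exact Finset.sum_congr rfl fun k _ => real_inner_smul_left _ _ _
  have h5 : ∑ k ∈ S, β k * ⟪u k, u j⟫ ≤ 0 :=
    Finset.sum_nonpos fun k hk => mul_nonpos_iff.2 (Or.inl ⟨hβ k hk,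
      hAll k j (fun he => hjS (he ▸ hk))⟩)
  have h6 : (1:ℝ) ≤ α * ⟪u i, u j⟫ := by linarith
  have hgm1 : -1 ≤ ⟪u i, u j⟫ := by
    have habs := abs_real_inner_le_norm (u i) (u j)
    rw [hu i, hu j, mul_one] at habs
    exact (abs_le.mp habs).1
  have hle : ⟪u i, u j⟫ ≤ -1 := by nlinarith
  linarith

end ConeAux

/-- a compact convex polyhedron `P ⊂ ℝⁿ` with nonempty interior all of whose
dihedral angles are at most `π/2` is extremal: if `P'` is a combinatorially equivalent convex
polyhedron with `∠_{ij}(P') ≤ ∠_{ij}(P)` for all pairs of adjacent facets, then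
`∠_{ij}(P') = ∠_{ij}(P)` for all such pairs.  Polyhedra are presented by their facet data:
unit outward normals `u i` and support values `c i`, the polyhedron being
`P = {x | ∀ i, ⟨u i, x⟩ ≤ c i}`; the (interior) dihedral angle along the `(n−2)`-face
`Q_i ∩ Q_j` is `π − arccos ⟨u i, u j⟩`; facets `i, j` are adjacent when `Q_i ∩ Q_j ≠ ∅`;
combinatorial equivalence means the same collections of facets have common points. -/
theorem convex_polyhedron_nonobtuse_extremal
    (n : ℕ) (ι : Type*) [Fintype ι]
    (u u' : ι → EuclideanSpace ℝ (Fin n)) (c c' : ι → ℝ)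
    (hu : ∀ i, ‖u i‖ = 1) (hu' : ∀ i, ‖u' i‖ = 1)
    -- the polyhedra, compact with nonempty interior:
    (hPcpt : IsCompact {x : EuclideanSpace ℝ (Fin n) | ∀ i, ⟪u i, x⟫ ≤ c i})
    (hPint : (interior {x : EuclideanSpace ℝ (Fin n) | ∀ i, ⟪u i, x⟫ ≤ c i}).Nonempty)
    (hP'cpt : IsCompact {x : EuclideanSpace ℝ (Fin n) | ∀ i, ⟪u' i, x⟫ ≤ c' i})
    (hP'int : (interior {x : EuclideanSpace ℝ (Fin n) | ∀ i, ⟪u' i, x⟫ ≤ c' i}).Nonempty)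
    -- each listed half-space contributes an actual facet (irredundancy):
    (hfacet : ∀ i, ∃ x, (∀ j, ⟪u j, x⟫ ≤ c j) ∧ ⟪u i, x⟫ = c i ∧ ∀ j, j ≠ i → ⟪u j, x⟫ < c j)
    (hfacet' : ∀ i, ∃ x, (∀ j, ⟪u' j, x⟫ ≤ c' j) ∧ ⟪u' i, x⟫ = c' i ∧
      ∀ j, j ≠ i → ⟪u' j, x⟫ < c' j)
    -- combinatorial equivalence (under the identification `Q_i ↔ Q'_i` of facets):
    (hcomb : ∀ s : Finset ι,
      (∃ x, (∀ j, ⟪u j, x⟫ ≤ c j) ∧ ∀ i ∈ s, ⟪u i, x⟫ = c i) ↔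
      (∃ x, (∀ j, ⟪u' j, x⟫ ≤ c' j) ∧ ∀ i ∈ s, ⟪u' i, x⟫ = c' i))
    -- all dihedral angles of `P` are at most `π/2`:
    (hnonobtuse : ∀ i j, i ≠ j →
      (∃ x, (∀ l, ⟪u l, x⟫ ≤ c l) ∧ ⟪u i, x⟫ = c i ∧ ⟪u j, x⟫ = c j) →
      Real.pi - Real.arccos ⟪u i, u j⟫ ≤ Real.pi / 2)
    -- the dihedral angles of `P'` are no larger than the corresponding ones of `P`:
    (hangle_le : ∀ i j, i ≠ j →
      (∃ x, (∀ l, ⟪u l, x⟫ ≤ c l) ∧ ⟪u i, x⟫ = c i ∧ ⟪u j, x⟫ = c j) →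
      Real.pi - Real.arccos ⟪u' i, u' j⟫ ≤ Real.pi - Real.arccos ⟪u i, u j⟫) :
    ∀ i j, i ≠ j →
      (∃ x, (∀ l, ⟪u l, x⟫ ≤ c l) ∧ ⟪u i, x⟫ = c i ∧ ⟪u j, x⟫ = c j) →
      Real.pi - Real.arccos ⟪u' i, u' j⟫ = Real.pi - Real.arccos ⟪u i, u j⟫ := by
  classical
  intro i j hij hadj
  have hfacet₀ : ∀ l, ∃ x, (∀ m, ⟪u m, x⟫ ≤ c m) ∧ ⟪u l, x⟫ = c l :=
    fun l => (hfacet l).imp fun x hx => ⟨hx.1, hx.2.1⟩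
  have hfacet₀' : ∀ l, ∃ x, (∀ m, ⟪u' m, x⟫ ≤ c' m) ∧ ⟪u' l, x⟫ = c' l :=
    fun l => (hfacet' l).imp fun x hx => ⟨hx.1, hx.2.1⟩
  have hadj_iff : ∀ k l : ι,
      (∃ x, (∀ m, ⟪u m, x⟫ ≤ c m) ∧ ⟪u k, x⟫ = c k ∧ ⟪u l, x⟫ = c l) ↔
      (∃ x, (∀ m, ⟪u' m, x⟫ ≤ c' m) ∧ ⟪u' k, x⟫ = c' k ∧ ⟪u' l, x⟫ = c' l) := by
    intro k l
    have hkl := hcomb {k, l}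
    constructor
    · rintro ⟨x, hx, hk, hl⟩
      obtain ⟨y, hy, hy2⟩ := hkl.mp ⟨x, hx, by
        intro m hm
        rcases Finset.mem_insert.mp hm with rfl | hm
        · exact hk
        · rw [Finset.mem_singleton.mp hm]; exact hl⟩
      exact ⟨y, hy, hy2 k (by simp), hy2 l (by simp)⟩
    · rintro ⟨x, hx, hk, hl⟩
      obtain ⟨y, hy, hy2⟩ := hkl.mpr ⟨x, hx, by
        intro m hm
        rcases Finset.mem_insert.mp hm with rfl | hm
        · exact hk
        · rw [Finset.mem_singleton.mp hm]; exact hl⟩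
      exact ⟨y, hy, hy2 k (by simp), hy2 l (by simp)⟩
  have hbnd : ∀ k l : ι, |⟪u k, u l⟫| ≤ 1 := by
    intro k l
    have h := abs_real_inner_le_norm (u k) (u l)
    rwa [hu k, hu l, mul_one] at h
  have hbnd' : ∀ k l : ι, |⟪u' k, u' l⟫| ≤ 1 := by
    intro k l
    have h := abs_real_inner_le_norm (u' k) (u' l)
    rwa [hu' k, hu' l, mul_one] at h
  have harc : ∀ k l, k ≠ l →
      (∃ x, (∀ m, ⟪u m, x⟫ ≤ c m) ∧ ⟪u k, x⟫ = c k ∧ ⟪u l, x⟫ = c l) →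
      Real.pi / 2 ≤ Real.arccos ⟪u k, u l⟫ := fun k l hkl h => by
    linarith [hnonobtuse k l hkl h]
  have harc' : ∀ k l, k ≠ l →
      (∃ x, (∀ m, ⟪u m, x⟫ ≤ c m) ∧ ⟪u k, x⟫ = c k ∧ ⟪u l, x⟫ = c l) →
      Real.pi / 2 ≤ Real.arccos ⟪u' k, u' l⟫ := fun k l hkl h => by
    linarith [hnonobtuse k l hkl h, hangle_le k l hkl h]
  have hAdjP : ∀ k l, k ≠ l →
      (∃ x, (∀ m, ⟪u m, x⟫ ≤ c m) ∧ ⟪u k, x⟫ = c k ∧ ⟪u l, x⟫ = c l) → ⟪u k, u l⟫ ≤ 0 := by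
    intro k l hkl h
    by_contra hpos
    push_neg at hpos
    have := Real.arccos_lt_pi_div_two.mpr hpos
    linarith [harc k l hkl h]
  have hAdjP' : ∀ k l, k ≠ l →
      (∃ x, (∀ m, ⟪u' m, x⟫ ≤ c' m) ∧ ⟪u' k, x⟫ = c' k ∧ ⟪u' l, x⟫ = c' l) →
      ⟪u' k, u' l⟫ ≤ 0 := by
    intro k l hkl h
    by_contra hpos
    push_neg at hpos
    have := Real.arccos_lt_pi_div_two.mpr hpos
    linarith [harc' k l hkl ((hadj_iff k l).mpr h)]
  have hAllP : ∀ k l, k ≠ l → ⟪u k, u l⟫ ≤ 0 := by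
    intro k l hkl
    by_cases h : ∃ x, (∀ m, ⟪u m, x⟫ ≤ c m) ∧ ⟪u k, x⟫ = c k ∧ ⟪u l, x⟫ = c l
    · exact hAdjP k l hkl h
    · exact (nonadj_inner_lt_zero hu hPcpt hfacet₀ hAdjP hkl h).le
  have hAllP' : ∀ k l, k ≠ l → ⟪u' k, u' l⟫ ≤ 0 := by
    intro k l hkl
    by_cases h : ∃ x, (∀ m, ⟪u' m, x⟫ ≤ c' m) ∧ ⟪u' k, x⟫ = c' k ∧ ⟪u' l, x⟫ = c' l
    · exact hAdjP' k l hkl h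
    · exact (nonadj_inner_lt_zero hu' hP'cpt hfacet₀' hAdjP' hkl h).le
  have hle : ∀ k l, k ≠ l → ⟪u' k, u' l⟫ ≤ ⟪u k, u l⟫ := by
    intro k l hkl
    by_cases h : ∃ x, (∀ m, ⟪u m, x⟫ ≤ c m) ∧ ⟪u k, x⟫ = c k ∧ ⟪u l, x⟫ = c l
    · by_contra hlt
      push_neg at hlt
      have harcs : Real.arccos ⟪u k, u l⟫ ≤ Real.arccos ⟪u' k, u' l⟫ := by
        linarith [hangle_le k l hkl h]
      have := Real.strictAntiOn_arccos
        ⟨(abs_le.mp (hbnd k l)).1, (abs_le.mp (hbnd k l)).2⟩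
        ⟨(abs_le.mp (hbnd' k l)).1, (abs_le.mp (hbnd' k l)).2⟩ hlt
      linarith
    · have h1 := nonadj_inner_eq_neg_one hu hPcpt hfacet₀ hAllP hkl h
      have h2 := nonadj_inner_eq_neg_one hu' hP'cpt hfacet₀' hAllP' hkl
        (fun hc => h ((hadj_iff k l).mpr hc))
      rw [h1, h2]
  obtain ⟨lam, hlam, hlsum⟩ := exists_pos_comb u c hPcpt (hPint.mono interior_subset)
  have hexpand : ∀ v : ι → EuclideanSpace ℝ (Fin n),
      ⟪∑ k, lam k • v k, ∑ l, lam l • v l⟫ = ∑ k, ∑ l, lam k * lam l * ⟪v k, v l⟫ := by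
    intro v
    rw [sum_inner]
    refine Finset.sum_congr rfl fun k _ => ?_
    rw [real_inner_smul_left, inner_sum, Finset.mul_sum]
    refine Finset.sum_congr rfl fun l _ => ?_
    rw [real_inner_smul_right]
    ring
  have e1 : ∑ k, ∑ l, lam k * lam l * ⟪u k, u l⟫ = 0 := by
    rw [← hexpand, hlsum]
    simp
  have e2 : (0:ℝ) ≤ ∑ k, ∑ l, lam k * lam l * ⟪u' k, u' l⟫ := by
    rw [← hexpand]
    exact real_inner_self_nonneg
  have hsumdiff : (0:ℝ) ≤ ∑ k, ∑ l, lam k * lam l * (⟪u' k, u' l⟫ - ⟪u k, u l⟫) := by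
    have hsplit : ∑ k, ∑ l, lam k * lam l * (⟪u' k, u' l⟫ - ⟪u k, u l⟫)
        = (∑ k, ∑ l, lam k * lam l * ⟪u' k, u' l⟫)
          - ∑ k, ∑ l, lam k * lam l * ⟪u k, u l⟫ := by
      rw [← Finset.sum_sub_distrib]
      refine Finset.sum_congr rfl fun k _ => ?_
      rw [← Finset.sum_sub_distrib]
      exact Finset.sum_congr rfl fun l _ => by ring
    rw [hsplit, e1, sub_zero]
    exact e2
  set F : ι × ι → ℝ := fun pq => lam pq.1 * lam pq.2 * (⟪u' pq.1, u' pq.2⟫ - ⟪u pq.1, u pq.2⟫)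
    with hF
  have hterm : ∀ pq ∈ (univ ×ˢ univ : Finset (ι × ι)), F pq ≤ 0 := by
    rintro ⟨k, l⟩ _
    rcases eq_or_ne k l with rfl | hne
    · have h1 : ⟪u k, u k⟫ = 1 := by
        rw [real_inner_self_eq_norm_sq, hu k]; norm_num
      have h2 : ⟪u' k, u' k⟫ = 1 := by
        rw [real_inner_self_eq_norm_sq, hu' k]; norm_num
      show lam k * lam k * (⟪u' k, u' k⟫ - ⟪u k, u k⟫) ≤ 0
      rw [h1, h2]
      simp
    · have hd := hle k l hne
      have h1 := (hlam k).le
      have h2 := (hlam l).le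
      show lam k * lam l * (⟪u' k, u' l⟫ - ⟪u k, u l⟫) ≤ 0
      exact mul_nonpos_iff.2 (Or.inl ⟨mul_nonneg h1 h2, by linarith⟩)
  have hprodsum : ∑ pq ∈ (univ ×ˢ univ : Finset (ι × ι)), F pq
      = ∑ k, ∑ l, lam k * lam l * (⟪u' k, u' l⟫ - ⟪u k, u l⟫) := by
    rw [Finset.sum_product]
  have hsum0 : ∑ pq ∈ (univ ×ˢ univ : Finset (ι × ι)), F pq = 0 := by
    refine le_antisymm (Finset.sum_nonpos hterm) ?_
    rw [hprodsum]
    exact hsumdiff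
  have hall0 := (Finset.sum_eq_zero_iff_of_nonpos hterm).mp hsum0 (i, j) (by simp)
  have heq : ⟪u' i, u' j⟫ = ⟪u i, u j⟫ := by
    have hall0' : lam i * lam j * (⟪u' i, u' j⟫ - ⟪u i, u j⟫) = 0 := hall0
    have hprod : lam i * lam j ≠ 0 := ne_of_gt (mul_pos (hlam i) (hlam j))
    rcases mul_eq_zero.mp hall0' with h | h
    · exact absurd h hprod
    · exact sub_eq_zero.mp h
  rw [heq]
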